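/- Let S be an n×n column-stochastic matrix, w and u probability vectors with all entries of u strictly positive, and α, β, γ ∈ [0,1] with α + β + γ = 1, α < 1 and γ > 0. Define R_{i,j} = α S_{i,j} + β w_i + γ u_i. Then R has a unique stationary probability vector y (satisfying y = Ry), and it equals the unique solution of y = αSy + βw + γu among probability vectors. -/

import Mathlib

theorem attrank_aux (n : ℕ) (S : Matrix (Fin n) (Fin n) ℝ)
    (hS0 : ∀ i j, 0 ≤ S i j) (hS1 : ∀ j, ∑ i, S i j = 1)
    (w u : Fin n → ℝ)
    (hw0 : ∀ i, 0 ≤ w i) (hw1 : ∑ i, w i = 1)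
    (hu0 : ∀ i, 0 ≤ u i) (hu1 : ∑ i, u i = 1)
    (α β γ : ℝ) (hα0 : 0 ≤ α) (hβ0 : 0 ≤ β) (hγ0 : 0 ≤ γ)
    (hsum : α + β + γ = 1) (hα1 : α < 1) :
    ∃! y : Fin n → ℝ, (∀ i, 0 ≤ y i) ∧ ∑ i, y i = 1 ∧
      y = (fun i => α * S.mulVec y i + β * w i + γ * u i) := by
  classical
  set X := PiLp 1 (fun _ : Fin n => ℝ) with hX
  set K : Set X := {y | (∀ i, 0 ≤ y i) ∧ ∑ i, y i = 1} with hK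
  have hdist : ∀ x y : X, dist x y = ∑ i, |x i - y i| := by
    intro x y
    rw [PiLp.dist_eq_sum (by norm_num)]
    simp [Real.dist_eq]
  -- the map preserves K
  have hmaps : ∀ y : X, y ∈ K →
      (WithLp.toLp 1 (fun i => α * S.mulVec y i + β * w i + γ * u i : Fin n → ℝ) : X) ∈ K := by
    intro y ⟨hy0, hy1⟩
    constructor
    · intro i
      have h1 : 0 ≤ S.mulVec y i := by
        simp only [Matrix.mulVec, dotProduct]
        exact Finset.sum_nonneg fun j _ => mul_nonneg (hS0 i j) (hy0 j)
      have := mul_nonneg hα0 h1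
      have := mul_nonneg hβ0 (hw0 i)
      have := mul_nonneg hγ0 (hu0 i)
      show 0 ≤ α * S.mulVec y i + β * w i + γ * u i
      linarith
    · have : ∑ i, (α * S.mulVec y i + β * w i + γ * u i) = α * (∑ i, S.mulVec y i) + β + γ := by
        rw [Finset.sum_add_distrib, Finset.sum_add_distrib, ← Finset.mul_sum, ← Finset.mul_sum, ← Finset.mul_sum,
          hw1, hu1, mul_one, mul_one]
      have h2 : ∑ i, S.mulVec y i = 1 := by
        simp only [Matrix.mulVec, dotProduct]
        rw [Finset.sum_comm]
        simp_rw [← Finset.sum_mul, hS1, one_mul]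
        exact hy1
      simpa [this, h2] using hsum
  haveI : Nonempty K := ⟨⟨WithLp.toLp 1 w, hw0, hw1⟩⟩
  have hclosed : IsClosed K := by
    have h1 : ∀ i : Fin n, Continuous fun y : X => y i := fun i =>
      (continuous_apply i).comp (PiLp.continuous_ofLp 1 _)
    have h2 : Continuous fun y : X => ∑ i, y i := continuous_finset_sum _ fun i _ => h1 i
    have : K = (⋂ i, {y : X | 0 ≤ y i}) ∩ {y : X | ∑ i, y i = 1} := by
      ext y; simp [hK, Set.mem_iInter]
    rw [this]
    exact ((isClosed_iInter fun i => isClosed_le continuous_const (h1 i)).inter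
      (isClosed_eq h2 continuous_const))
  haveI : CompleteSpace K := hclosed.completeSpace_coe
  set f : K → K := fun y =>
    ⟨(WithLp.toLp 1 (fun i => α * S.mulVec y i + β * w i + γ * u i : Fin n → ℝ) : X), hmaps y y.2⟩ with hf
  have hlip : ∀ x y : K, dist (f x) (f y) ≤ α * dist x y := by
    intro x y
    rw [Subtype.dist_eq, Subtype.dist_eq, hdist, hdist]
    have : ∀ i, |(f x : X) i - (f y : X) i| = α * |∑ j, S i j * ((x : X) j - (y : X) j)| := by
      intro i
      have : (f x : X) i - (f y : X) i = α * (∑ j, S i j * ((x : X) j - (y : X) j)) := by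
        simp only [hf, Matrix.mulVec, dotProduct, WithLp.ofLp_toLp]
        have h3 : ∑ j, S i j * ((x : X) j - (y : X) j)
            = (∑ j, S i j * (x : X) j) - ∑ j, S i j * (y : X) j := by
          rw [← Finset.sum_sub_distrib]
          exact Finset.sum_congr rfl fun j _ => by ring
        rw [h3]
        ring
      rw [this, abs_mul, abs_of_nonneg hα0]
    calc ∑ i, |(f x : X) i - (f y : X) i|
        = α * ∑ i, |∑ j, S i j * ((x : X) j - (y : X) j)| := by
          rw [Finset.mul_sum]; exact Finset.sum_congr rfl fun i _ => this i
      _ ≤ α * ∑ i, ∑ j, S i j * |(x : X) j - (y : X) j| := by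
          apply mul_le_mul_of_nonneg_left _ hα0
          apply Finset.sum_le_sum
          intro i _
          calc |∑ j, S i j * ((x : X) j - (y : X) j)| ≤ ∑ j, |S i j * ((x : X) j - (y : X) j)| :=
                Finset.abs_sum_le_sum_abs _ _
            _ = ∑ j, S i j * |(x : X) j - (y : X) j| := by
                apply Finset.sum_congr rfl
                intro j _
                rw [abs_mul, abs_of_nonneg (hS0 i j)]
      _ = α * ∑ j, |(x : X) j - (y : X) j| := by
          congr 1
          rw [Finset.sum_comm]
          apply Finset.sum_congr rfl
          intro j _
          rw [← Finset.sum_mul, hS1, one_mul]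
  have hc : ContractingWith ⟨α, hα0⟩ f := by
    constructor
    · exact_mod_cast hα1
    · exact LipschitzWith.of_dist_le_mul hlip
  refine ⟨((ContractingWith.fixedPoint f hc : K) : X), ⟨(ContractingWith.fixedPoint f hc).2.1, (ContractingWith.fixedPoint f hc).2.2, ?_⟩, ?_⟩
  · have := hc.fixedPoint_isFixedPt
    have h := congrArg (Subtype.val) this
    exact congrArg WithLp.ofLp h.symm
  · intro z ⟨hz0, hz1, hzfix⟩
    have hz : WithLp.toLp 1 z ∈ K := ⟨hz0, hz1⟩
    have : Function.IsFixedPt f ⟨WithLp.toLp 1 z, hz⟩ := by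
      apply Subtype.ext
      exact congrArg (WithLp.toLp 1) hzfix.symm
    have := hc.fixedPoint_unique this
    exact congrArg (fun v : K => (v : X).ofLp) this

theorem attrank_convergence (n : ℕ) (S : Matrix (Fin n) (Fin n) ℝ)
    (hS0 : ∀ i j, 0 ≤ S i j) (hS1 : ∀ j, ∑ i, S i j = 1)
    (w u : Fin n → ℝ)
    (hw0 : ∀ i, 0 ≤ w i) (hw1 : ∑ i, w i = 1)
    (hu0 : ∀ i, 0 < u i) (hu1 : ∑ i, u i = 1)
    (α β γ : ℝ) (hα : α ∈ Set.Icc (0 : ℝ) 1) (hβ : β ∈ Set.Icc (0 : ℝ) 1)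
    (hγ : γ ∈ Set.Icc (0 : ℝ) 1) (hsum : α + β + γ = 1) (hα1 : α < 1) (hγ0 : 0 < γ)
    (R : Matrix (Fin n) (Fin n) ℝ)
    (hR : R = Matrix.of fun i j => α * S i j + β * w i + γ * u i) :
    (∃! y : Fin n → ℝ, (∀ i, 0 ≤ y i) ∧ ∑ i, y i = 1 ∧ y = R.mulVec y) ∧
      ∀ y : Fin n → ℝ, (∀ i, 0 ≤ y i) → ∑ i, y i = 1 →
        (y = R.mulVec y ↔ y = α • S.mulVec y + β • w + γ • u) := by
  have hRy : ∀ y : Fin n → ℝ, ∑ i, y i = 1 →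
      R.mulVec y = fun i => α * S.mulVec y i + β * w i + γ * u i := by
    intro y hy
    funext i
    simp only [hR, Matrix.mulVec, dotProduct, Matrix.of_apply]
    have h1 : ∑ j, (α * S i j + β * w i + γ * u i) * y j
        = α * (∑ j, S i j * y j) + (β * w i) * (∑ j, y j) + (γ * u i) * (∑ j, y j) := by
      rw [Finset.mul_sum, Finset.mul_sum, Finset.mul_sum, ← Finset.sum_add_distrib,
        ← Finset.sum_add_distrib]
      exact Finset.sum_congr rfl fun j _ => by ring
    rw [h1, hy]
    ring
  have hsmul : ∀ y : Fin n → ℝ,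
      α • S.mulVec y + β • w + γ • u = fun i => α * S.mulVec y i + β * w i + γ * u i := by
    intro y
    funext i
    simp [Pi.add_apply, Pi.smul_apply, smul_eq_mul]
  obtain ⟨y₀, hy₀, huniq⟩ := attrank_aux n S hS0 hS1 w u hw0 hw1
    (fun i => (hu0 i).le) hu1 α β γ hα.1 hβ.1 hγ.1 hsum hα1
  constructor
  · refine ⟨y₀, ⟨hy₀.1, hy₀.2.1, ?_⟩, ?_⟩
    · rw [hRy y₀ hy₀.2.1]
      exact hy₀.2.2
    · rintro z ⟨hz0, hz1, hzfix⟩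
      exact huniq z ⟨hz0, hz1, by rw [← hRy z hz1]; exact hzfix⟩
  · intro y _ hy1
    rw [hRy y hy1, hsmul y]
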